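/- Fix m ≥ 1 and let U : [0,∞) → ℝ be a positive C² solution of U'' + m·coth(m r)·U' + (m/2)·sech^{(2−m)/m}(m r/2)·csch(m r/2)·U = 0 on (0,∞) with U bounded away from 0. Then U'(r)/U(r) → 0 as r → ∞. -/

import Mathlib

open Real Filter

/-- If `U` is a positive `C²` solution, bounded away from zero, of
`U'' + m coth(m r) U' + (m/2) sech^{(2−m)/m}(m r/2) csch(m r/2) U = 0` on `(0,∞)`,
then `U'(r)/U(r) → 0` as `r → ∞`. -/
theorem log_deriv_tendsto_zero (m : ℕ) (hm : 1 ≤ m) (U : ℝ → ℝ)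
    (hU : ContDiffOn ℝ 2 U (Set.Ici (0 : ℝ)))
    (hpos : ∀ r : ℝ, 0 ≤ r → 0 < U r)
    (hbdd : ∃ c : ℝ, 0 < c ∧ ∀ r : ℝ, 0 ≤ r → c ≤ U r)
    (hode : ∀ r : ℝ, 0 < r →
      deriv (deriv U) r
        + (m : ℝ) * (Real.cosh ((m : ℝ) * r) / Real.sinh ((m : ℝ) * r)) * deriv U r
        + ((m : ℝ) / 2) * ((Real.cosh ((m : ℝ) * r / 2))⁻¹ ^ (((2 : ℝ) - (m : ℝ)) / (m : ℝ)))
            * (Real.sinh ((m : ℝ) * r / 2))⁻¹ * U r = 0) :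
    Tendsto (fun r : ℝ => deriv U r / U r) atTop (nhds 0) := by
  obtain ⟨c, hc, hcU⟩ := hbdd
  set M : ℝ := (m : ℝ) with hMdef
  have hM : (1:ℝ) ≤ M := by rw [hMdef]; exact_mod_cast hm
  have hM0 : (0:ℝ) < M := lt_of_lt_of_le one_pos hM
  have hM0' : M ≠ 0 := ne_of_gt hM0
  set dU : ℝ → ℝ := derivWithin U (Set.Ici (0:ℝ)) with hdUdef
  have hdU_cont : ContinuousOn dU (Set.Ici (0:ℝ)) :=
    hU.continuousOn_derivWithin (uniqueDiffOn_Ici 0) (by norm_num)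
  have hdU_eq : ∀ r : ℝ, 0 < r → dU r = deriv U r := fun r hr =>
    derivWithin_of_mem_nhds (Ici_mem_nhds hr)
  have hUo : ContDiffOn ℝ 2 U (Set.Ioi (0:ℝ)) := hU.mono Set.Ioi_subset_Ici_self
  have hU1 : ContDiffOn ℝ 1 (deriv U) (Set.Ioi (0:ℝ)) :=
    hUo.deriv_of_isOpen isOpen_Ioi (by norm_num)
  have hD2 : ∀ r : ℝ, 0 < r → HasDerivAt (deriv U) (deriv (deriv U) r) r := fun r hr =>
    ((hU1.differentiableOn (by norm_num)).differentiableAt (isOpen_Ioi.mem_nhds hr)).hasDerivAt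
  -- the identity
  have hident : ∀ r : ℝ, 0 < r →
      Real.sinh (M * r) * ((M / 2) * ((Real.cosh (M * r / 2))⁻¹ ^ (((2:ℝ) - M) / M))
        * (Real.sinh (M * r / 2))⁻¹)
      = M * Real.cosh (M * r / 2) ^ ((2*M - 2)/M) := by
    intro r hr
    have hx : 0 < M * r / 2 := by positivity
    have hsx : Real.sinh (M * r / 2) ≠ 0 := (Real.sinh_pos_iff.mpr hx).ne'
    have hcx : (0:ℝ) < Real.cosh (M * r / 2) := Real.cosh_pos _
    have h2 : Real.sinh (M * r) = 2 * Real.sinh (M*r/2) * Real.cosh (M*r/2) := by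
      have h := Real.sinh_two_mul (M*r/2)
      rw [show 2*(M*r/2) = M*r by ring] at h
      exact h
    rw [h2, Real.inv_rpow hcx.le, ← Real.rpow_neg hcx.le,
      show -(((2:ℝ) - M)/M) = (M - 2)/M from by ring,
      show (2*M - 2)/M = 1 + (M-2)/M from by field_simp; ring,
      Real.rpow_add hcx, Real.rpow_one]
    field_simp
  set K : ℝ → ℝ := fun r => M * Real.cosh (M * r / 2) ^ ((2*M - 2)/M) with hKdef
  have hKpos : ∀ r : ℝ, 0 < K r := fun r =>
    mul_pos hM0 (Real.rpow_pos_of_pos (Real.cosh_pos _) _)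
  have hKle : ∀ r : ℝ, 0 ≤ r → K r ≤ M * Real.exp ((M-1)*r) := by
    intro r hr
    have hy : (0:ℝ) ≤ M * r / 2 := by positivity
    have hch : Real.cosh (M*r/2) ≤ Real.exp (M*r/2) := by
      rw [Real.cosh_eq]
      have := Real.exp_le_exp.mpr (neg_le_self hy)
      linarith
    have hexp : (0:ℝ) ≤ (2*M-2)/M := by
      apply div_nonneg _ hM0.le; linarith
    have h1 : Real.cosh (M*r/2) ^ ((2*M-2)/M) ≤ Real.exp (M*r/2) ^ ((2*M-2)/M) :=
      Real.rpow_le_rpow (Real.cosh_pos _).le hch hexp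
    have h2 : Real.exp (M*r/2) ^ ((2*M-2)/M) = Real.exp ((M-1)*r) := by
      rw [← Real.exp_mul]
      congr 1
      field_simp
    rw [h2] at h1
    exact mul_le_mul_of_nonneg_left h1 hM0.le
  set V : ℝ → ℝ := fun r => Real.sinh (M * r) * dU r with hVdef
  have hV0 : V 0 = 0 := by simp [hVdef]
  have hVcont : ContinuousOn V (Set.Ici 0) :=
    ((Real.continuous_sinh.comp (continuous_const.mul continuous_id)).continuousOn).mul hdU_cont
  -- derivative of V
  have hVd : ∀ r : ℝ, 0 < r → HasDerivAt V (-(K r * U r)) r := by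
    intro r hr
    have hs : HasDerivAt (fun x => Real.sinh (M * x)) (Real.cosh (M * r) * M) r := by
      have h0 : HasDerivAt (fun x : ℝ => M * x) M r := by
        simpa using (hasDerivAt_id r).const_mul M
      simpa [Function.comp_def] using (Real.hasDerivAt_sinh (M*r)).comp r h0
    have hprod := hs.mul (hD2 r hr)
    have hee : (fun x => Real.sinh (M*x) * deriv U x) =ᶠ[nhds r] V := by
      filter_upwards [isOpen_Ioi.mem_nhds hr] with x hx
      simp only [hVdef]
      rw [hdU_eq x hx]
    have hval : Real.cosh (M*r) * M * deriv U r + Real.sinh (M*r) * deriv (deriv U) r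
        = -(K r * U r) := by
      have hode' := hode r hr
      have hsinh : (0:ℝ) < Real.sinh (M * r) := Real.sinh_pos_iff.mpr (by positivity)
      have hid := hident r hr
      have hA : deriv (deriv U) r
          = -(M * (Real.cosh (M*r) / Real.sinh (M*r)) * deriv U r)
            - ((M / 2) * ((Real.cosh (M * r / 2))⁻¹ ^ (((2:ℝ) - M) / M))
              * (Real.sinh (M * r / 2))⁻¹) * U r := by linarith
      simp only [hKdef]
      rw [hA, ← hid]
      field_simp
      ring
    rw [hval] at hprod
    exact hprod.congr_of_eventuallyEq hee.symm
  -- V is antitone, hence nonpositive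
  have hVanti : AntitoneOn V (Set.Ici 0) := by
    apply antitoneOn_of_deriv_nonpos (convex_Ici 0) hVcont
    · intro x hx
      rw [interior_Ici] at hx
      exact ((hVd x hx).differentiableAt).differentiableWithinAt
    · intro x hx
      rw [interior_Ici] at hx
      rw [(hVd x hx).deriv]
      have h1 := hKpos x
      have h2 := hpos x hx.le
      nlinarith
  have hVle : ∀ r : ℝ, 0 ≤ r → V r ≤ 0 := by
    intro r hr
    have := hVanti (Set.self_mem_Ici) hr hr
    rwa [hV0] at this
  have hdU_nonpos : ∀ r : ℝ, 0 < r → deriv U r ≤ 0 := by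
    intro r hr
    have hsinh : (0:ℝ) < Real.sinh (M * r) := Real.sinh_pos_iff.mpr (by positivity)
    have h := hVle r hr.le
    simp only [hVdef] at h
    rw [hdU_eq r hr] at h
    nlinarith
  -- U is antitone
  have hUanti : AntitoneOn U (Set.Ici 0) := by
    apply antitoneOn_of_deriv_nonpos (convex_Ici 0) hU.continuousOn
    · rw [interior_Ici]
      exact (hUo.differentiableOn (by norm_num))
    · intro x hx
      rw [interior_Ici] at hx
      exact hdU_nonpos x hx
  have hUle : ∀ r : ℝ, 0 ≤ r → U r ≤ U 0 := fun r hr =>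
    hUanti Set.self_mem_Ici hr hr
  have hU0pos : 0 < U 0 := hpos 0 le_rfl
  -- W := V + M * U 0 * (r * exp ((M-1) r)) is monotone
  set W : ℝ → ℝ := fun r => V r + M * U 0 * (r * Real.exp ((M-1)*r)) with hWdef
  have hGd : ∀ r : ℝ, HasDerivAt (fun x : ℝ => x * Real.exp ((M-1)*x))
      (Real.exp ((M-1)*r) + r * (Real.exp ((M-1)*r) * (M-1))) r := by
    intro r
    have h0 : HasDerivAt (fun x : ℝ => (M-1) * x) (M-1) r := by
      simpa using (hasDerivAt_id r).const_mul (M-1)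
    have he : HasDerivAt (fun x : ℝ => Real.exp ((M-1)*x)) (Real.exp ((M-1)*r) * (M-1)) r := by
      simpa [Function.comp_def] using (Real.hasDerivAt_exp ((M-1)*r)).comp r h0
    simpa [Pi.mul_def] using (hasDerivAt_id r).mul he
  have hWd : ∀ r : ℝ, 0 < r → HasDerivAt W
      (-(K r * U r) + M * U 0 * (Real.exp ((M-1)*r) + r * (Real.exp ((M-1)*r) * (M-1)))) r :=
    fun r hr => (hVd r hr).add (((hGd r).const_mul (M * U 0)))
  have hWmono : MonotoneOn W (Set.Ici 0) := by
    apply monotoneOn_of_deriv_nonneg (convex_Ici 0)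
    · exact hVcont.add (Continuous.continuousOn
        (continuous_const.mul (continuous_id.mul
          (Real.continuous_exp.comp (continuous_const.mul continuous_id)))))
    · intro x hx
      rw [interior_Ici] at hx
      exact ((hWd x hx).differentiableAt).differentiableWithinAt
    · intro x hx
      rw [interior_Ici] at hx
      rw [(hWd x hx).deriv]
      have h1 := hKle x hx.le
      have h2 := hUle x hx.le
      have h3 := hpos x hx.le
      have h4 : (0:ℝ) < Real.exp ((M-1)*x) := Real.exp_pos _
      have h5 : K x * U x ≤ M * Real.exp ((M-1)*x) * U 0 := by
        have := hKpos x
        nlinarith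
      have h6 : 0 ≤ x * (Real.exp ((M-1)*x) * (M-1)) :=
        mul_nonneg hx.le (mul_nonneg h4.le (by linarith))
      nlinarith [mul_nonneg (mul_nonneg hM0.le hU0pos.le) h6]
  have hVlb : ∀ r : ℝ, 0 ≤ r → -(M * U 0 * (r * Real.exp ((M-1)*r))) ≤ V r := by
    intro r hr
    have := hWmono Set.self_mem_Ici hr hr
    simp only [hWdef, hV0] at this
    simp only [hVdef] at this ⊢
    nlinarith [this]
  -- final squeeze
  have hbound : ∀ᶠ r : ℝ in atTop, ‖deriv U r / U r‖ ≤ (4*M*U 0/c) * (r * Real.exp (-r)) := by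
    filter_upwards [eventually_ge_atTop (1:ℝ)] with r hr
    have hr0 : (0:ℝ) < r := lt_of_lt_of_le one_pos hr
    have hUr := hpos r hr0.le
    have hcr := hcU r hr0.le
    have hdnp := hdU_nonpos r hr0
    have hsinh : (0:ℝ) < Real.sinh (M * r) := Real.sinh_pos_iff.mpr (by positivity)
    have hMr1 : (1:ℝ) ≤ M * r := by nlinarith
    have hsinh_lb : Real.exp (M*r) / 4 ≤ Real.sinh (M*r) := by
      rw [Real.sinh_eq]
      have h1 : Real.exp (-(M*r)) ≤ Real.exp (M*r) / 2 := by
        have e1 : Real.exp (-(M*r)) ≤ 1 := Real.exp_le_one_iff.mpr (by linarith)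
        have e2 : (2:ℝ) ≤ Real.exp (M*r) := by
          have := Real.add_one_le_exp (M*r)
          linarith
        linarith
      linarith
    -- bound -deriv U r
    have hVlb' := hVlb r hr0.le
    have hVr : V r = Real.sinh (M*r) * deriv U r := by
      simp only [hVdef]; rw [hdU_eq r hr0]
    rw [hVr] at hVlb'
    have hdlb : -deriv U r ≤ M * U 0 * (r * Real.exp ((M-1)*r)) / Real.sinh (M*r) := by
      rw [le_div_iff₀ hsinh]
      nlinarith
    have hstep : M * U 0 * (r * Real.exp ((M-1)*r)) / Real.sinh (M*r)
        ≤ 4 * M * U 0 * (r * Real.exp (-r)) := by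
      have hnum : (0:ℝ) ≤ M * U 0 * (r * Real.exp ((M-1)*r)) := by positivity
      have h1 : M * U 0 * (r * Real.exp ((M-1)*r)) / Real.sinh (M*r)
          ≤ M * U 0 * (r * Real.exp ((M-1)*r)) / (Real.exp (M*r) / 4) := by
        apply div_le_div_of_nonneg_left hnum (by positivity) hsinh_lb
      have h2 : M * U 0 * (r * Real.exp ((M-1)*r)) / (Real.exp (M*r) / 4)
          = 4 * M * U 0 * (r * Real.exp (-r)) := by
        have hE : Real.exp ((M-1)*r) = Real.exp (-r) * Real.exp (M*r) := by
          rw [← Real.exp_add]; ring_nf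
        rw [hE]
        field_simp
      linarith
    have habs : ‖deriv U r / U r‖ = -deriv U r / U r := by
      rw [Real.norm_eq_abs, abs_div, abs_of_pos hUr, abs_of_nonpos hdnp, neg_div]
    rw [habs]
    have hstep2 : -deriv U r / U r ≤ -deriv U r / c := by
      apply div_le_div_of_nonneg_left (by linarith) hc hcr
    have hd4 : -deriv U r ≤ 4*M*U 0*(r*Real.exp (-r)) := le_trans hdlb hstep
    calc -deriv U r / U r ≤ -deriv U r / c := hstep2
      _ ≤ (4*M*U 0*(r*Real.exp (-r)))/c := (div_le_div_iff_of_pos_right hc).mpr hd4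
      _ = (4*M*U 0/c) * (r * Real.exp (-r)) := by ring
  have hlim : Tendsto (fun r : ℝ => (4*M*U 0/c) * (r * Real.exp (-r))) atTop (nhds 0) := by
    have h1 : Tendsto (fun r : ℝ => r * Real.exp (-r)) atTop (nhds 0) := by
      simpa using Real.tendsto_pow_mul_exp_neg_atTop_nhds_zero 1
    simpa using h1.const_mul (4*M*U 0/c)
  exact squeeze_zero_norm' hbound hlim
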